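/- Let L > 0 and let S : (0,1)ⁿ → ℝⁿ be defined recursively by o₀ = 2L·(d₀ − 1/2) and o_i = d_i·(L − o_{i-1}) + o_{i-1} for 1 ≤ i ≤ n−1, where d = (d₀,...,d_{n-1}) ∈ (0,1)ⁿ. Then S is the inverse of the map T of the previous statement: for every strictly increasing x ∈ (−L, L)ⁿ, S(T(x)) = x, and the image of S consists of strictly increasing tuples in (−L, L)ⁿ. -/

import Mathlib

/-- The relative coordinate transform for ordered particles in the box `[-L, L]`. -/
noncomputable def relT (L : ℝ) (n : ℕ) (x : Fin n → ℝ) : Fin n → ℝ := fun i =>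
  if _h : (i : ℕ) = 0 then (x i + L) / (2 * L)
  else
    (x i - x ⟨(i : ℕ) - 1, Nat.lt_of_le_of_lt (Nat.sub_le _ _) i.isLt⟩) /
      (L - x ⟨(i : ℕ) - 1, Nat.lt_of_le_of_lt (Nat.sub_le _ _) i.isLt⟩)

/-- Auxiliary recursion reconstructing absolute coordinates from relative ones. -/
noncomputable def relSaux (L : ℝ) (d : ℕ → ℝ) : ℕ → ℝ
  | 0 => 2 * L * (d 0 - 1 / 2)
  | (i + 1) => d (i + 1) * (L - relSaux L d i) + relSaux L d i

/-- The inverse map: reconstructs absolute coordinates from relative ones. -/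
noncomputable def relS (L : ℝ) (n : ℕ) (d : Fin n → ℝ) : Fin n → ℝ := fun i =>
  relSaux L (fun j => if h : j < n then d ⟨j, h⟩ else 0) (i : ℕ)

lemma relSaux_mem (L : ℝ) (hL : 0 < L) (n : ℕ) (d : Fin n → ℝ)
    (hd : ∀ i, d i ∈ Set.Ioo (0 : ℝ) 1) :
    ∀ i, i < n → relSaux L (fun j => if h : j < n then d ⟨j, h⟩ else 0) i ∈ Set.Ioo (-L) L := by
  intro i
  induction i with
  | zero =>
    intro hi
    have h0 := hd ⟨0, hi⟩
    simp only [relSaux, hi, dif_pos]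
    obtain ⟨h1, h2⟩ := h0
    constructor <;> nlinarith
  | succ k ih =>
    intro hk
    have hk' : k < n := Nat.lt_of_succ_lt hk
    obtain ⟨h1, h2⟩ := ih hk'
    have hdk := hd ⟨k + 1, hk⟩
    obtain ⟨hd1, hd2⟩ := hdk
    simp only [relSaux, hk, dif_pos]
    constructor <;> nlinarith

lemma relSaux_strict (L : ℝ) (hL : 0 < L) (n : ℕ) (d : Fin n → ℝ)
    (hd : ∀ i, d i ∈ Set.Ioo (0 : ℝ) 1) :
    ∀ a b, a < b → b < n →
      relSaux L (fun j => if h : j < n then d ⟨j, h⟩ else 0) a <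
      relSaux L (fun j => if h : j < n then d ⟨j, h⟩ else 0) b := by
  intro a b
  induction b with
  | zero => omega
  | succ m ih =>
    intro hab hm
    have hm' : m < n := Nat.lt_of_succ_lt hm
    have hstep : relSaux L (fun j => if h : j < n then d ⟨j, h⟩ else 0) m <
        relSaux L (fun j => if h : j < n then d ⟨j, h⟩ else 0) (m + 1) := by
      have hmem := relSaux_mem L hL n d hd m hm'
      have hdm := hd ⟨m + 1, hm⟩
      obtain ⟨_, h2⟩ := hmem
      obtain ⟨hd1, _⟩ := hdm
      simp only [relSaux, hm, dif_pos]
      nlinarith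
    rcases Nat.lt_or_ge a m with h | h
    · exact lt_trans (ih h hm') hstep
    · have : a = m := by omega
      subst this; exact hstep

theorem relS_inverse_of_relT (L : ℝ) (hL : 0 < L) (n : ℕ) :
    (∀ x : Fin n → ℝ, StrictMono x → (∀ i, x i ∈ Set.Ioo (-L) L) →
      relS L n (relT L n x) = x) ∧
    (∀ d : Fin n → ℝ, (∀ i, d i ∈ Set.Ioo (0 : ℝ) 1) →
      StrictMono (relS L n d) ∧ ∀ i, relS L n d i ∈ Set.Ioo (-L) L) := by
  constructor
  · intro x hmono hx
    funext i
    obtain ⟨i, hi⟩ := i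
    induction i with
    | zero =>
      simp only [relS, relSaux, hi, dif_pos, relT]
      have h2L : (2 * L) ≠ 0 := by positivity
      field_simp
      ring
    | succ k ih =>
      have hk : k < n := Nat.lt_of_succ_lt hi
      have ihk := ih hk
      have hxk : x ⟨k, hk⟩ < L := (hx ⟨k, hk⟩).2
      have hLx : L - x ⟨k, hk⟩ ≠ 0 := by linarith [hxk]
      simp only [relS] at ihk ⊢
      simp only [relSaux, hi, dif_pos]
      rw [ihk]
      have : relT L n x ⟨k + 1, hi⟩ =
          (x ⟨k + 1, hi⟩ - x ⟨k, hk⟩) / (L - x ⟨k, hk⟩) := by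
        simp [relT]
      rw [this]
      field_simp
      ring
  · intro d hd
    constructor
    · intro a b hab
      exact relSaux_strict L hL n d hd a.val b.val hab b.isLt
    · intro i
      exact relSaux_mem L hL n d hd i.val i.isLt
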